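/- Let T be an ext-free(Q)-connex tree for a CQ Q with subtree T' containing exactly the free variables. Then two free variables are neighbors in T (appear together in some node of T) if and only if they are neighbors in T' (appear together in some node of T'). Consequently, Q has a disruptive trio with respect to an order L of the free variables in T if and only if it has one in T'. -/

import Mathlib

/-- A disruptive trio w.r.t. a neighborhood relation `nbr` and an order `L`. -/
def DTrio {V : Type*} [DecidableEq V] (nbr : V → V → Prop) (L : List V) : Prop :=
  ∃ a b c, a ∈ L ∧ b ∈ L ∧ c ∈ L ∧ a ≠ b ∧ ¬ nbr a b ∧ nbr a c ∧ nbr b c ∧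
    L.idxOf a < L.idxOf c ∧ L.idxOf b < L.idxOf c

open SimpleGraph in
/-- From preconnectivity of the induced subgraph, extract a path in the ambient
graph with support inside the set. -/
lemma exists_path_in_set {ι : Type*} [DecidableEq ι] (G : SimpleGraph ι) (X : Set ι)
    (hX : (G.induce X).Preconnected) {a b : ι} (ha : a ∈ X) (hb : b ∈ X) :
    ∃ p : G.Walk a b, p.IsPath ∧ ∀ x ∈ p.support, x ∈ X := by
  obtain ⟨w⟩ := hX ⟨a, ha⟩ ⟨b, hb⟩
  let w' : G.Walk a b := w.map (SimpleGraph.Embedding.induce X).toHom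
  refine ⟨w'.bypass, w'.bypass_isPath, fun x hx => ?_⟩
  have hx' := w'.support_bypass_subset hx
  replace hx' : x ∈ w.support.map (SimpleGraph.Embedding.induce (G := G) X).toHom := by
    rw [← SimpleGraph.Walk.support_map]; exact hx'
  obtain ⟨y, _, rfl⟩ := List.mem_map.mp hx'
  exact y.2

open SimpleGraph in
/-- Given paths `p : j → i` and `q : k → i`, there is a path `r : j → k` and
a vertex `m` lying on `r`, `p` and `q`, with `r` supported in the union. -/
lemma exists_meeting_vertex {ι : Type*} [DecidableEq ι] {G : SimpleGraph ι} :
    ∀ {j i k : ι} (p : G.Walk j i) (q : G.Walk k i), p.IsPath → q.IsPath →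
      ∃ (m : ι) (r : G.Walk j k), r.IsPath ∧ m ∈ r.support ∧ m ∈ p.support ∧
        m ∈ q.support ∧ ∀ x ∈ r.support, x ∈ p.support ∨ x ∈ q.support := by
  intro j i k p
  induction p with
  | nil =>
    intro q hp hq
    refine ⟨_, q.reverse, hq.reverse, ?_, ?_, q.end_mem_support, ?_⟩
    · exact SimpleGraph.Walk.start_mem_support _
    · exact SimpleGraph.Walk.start_mem_support _
    · intro x hx
      right
      simpa [SimpleGraph.Walk.support_reverse] using hx
  | @cons j j' i h p' ih =>
    intro q hp hq
    rw [SimpleGraph.Walk.cons_isPath_iff] at hp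
    by_cases hjq : j ∈ q.support
    · refine ⟨j, ((SimpleGraph.Walk.cons h p').append q.reverse).bypass,
        SimpleGraph.Walk.bypass_isPath _, SimpleGraph.Walk.start_mem_support _,
        SimpleGraph.Walk.start_mem_support _, hjq, fun x hx => ?_⟩
      have hx2 := SimpleGraph.Walk.support_bypass_subset _ hx
      rw [SimpleGraph.Walk.mem_support_append_iff] at hx2
      rcases hx2 with h1 | h1
      · exact Or.inl h1
      · right; simpa [SimpleGraph.Walk.support_reverse] using h1
    · obtain ⟨m, r', hr', hmr, hmp, hmq, hsub⟩ := ih q hp.1 hq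
      have hjr : j ∉ r'.support := fun hj => by
        rcases hsub j hj with h1 | h1
        · exact hp.2 h1
        · exact hjq h1
      refine ⟨m, SimpleGraph.Walk.cons h r', hr'.cons hjr, ?_, ?_, hmq, ?_⟩
      · simp [hmr]
      · simp [hmp]
      · intro x hx
        rw [SimpleGraph.Walk.support_cons, List.mem_cons] at hx
        rcases hx with rfl | hx
        · exact Or.inl (SimpleGraph.Walk.start_mem_support _)
        · rcases hsub x hx with h1 | h1
          · left; simp [h1]
          · exact Or.inr h1

/-- Let `T` (tree `G` with node labels `lab`) be an
ext-`free(Q)`-connex tree for a CQ `Q`: a join tree of an inclusive extension of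
`H(Q)` (every hyperedge of `E` is a node label and every node label is contained
in a hyperedge of `E`) satisfying the running intersection property, with a
connected subtree `S` whose labels cover exactly the free variables.
Then two free variables are neighbors in `T` iff they are neighbors in the
subtree `S`; consequently, for any order `L` of free variables, there is a
disruptive trio w.r.t. the neighborhood relation of `T` iff there is one w.r.t.
the neighborhood relation of the subtree. -/
theorem neighbors_in_tree_iff_in_subtree {V ι : Type*} [DecidableEq V]
    (E : Finset (Finset V)) (free : Finset V)
    (G : SimpleGraph ι) (hG : G.IsTree) (lab : ι → Finset V)
    (hext1 : ∀ e ∈ E, ∃ i, lab i = e)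
    (hext2 : ∀ i, ∃ e ∈ E, lab i ⊆ e)
    (hrip : ∀ v : V, (G.induce {i | v ∈ lab i}).Preconnected)
    (S : Set ι) (hconn : (G.induce S).Preconnected)
    (hcov : ∀ v : V, v ∈ free ↔ ∃ i ∈ S, v ∈ lab i) :
    (∀ u ∈ free, ∀ v ∈ free,
        ((∃ i, u ∈ lab i ∧ v ∈ lab i) ↔ (∃ i ∈ S, u ∈ lab i ∧ v ∈ lab i))) ∧
    (∀ L : List V, (∀ x ∈ L, x ∈ free) →
        (DTrio (fun u v => ∃ i, u ∈ lab i ∧ v ∈ lab i) L ↔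
         DTrio (fun u v => ∃ i ∈ S, u ∈ lab i ∧ v ∈ lab i) L)) := by
  classical
  have main : ∀ u ∈ free, ∀ v ∈ free,
      ((∃ i, u ∈ lab i ∧ v ∈ lab i) ↔ (∃ i ∈ S, u ∈ lab i ∧ v ∈ lab i)) := by
    intro u hu v hv
    constructor
    · rintro ⟨i, hui, hvi⟩
      obtain ⟨jj, hjS, hju⟩ := (hcov u).mp hu
      obtain ⟨kk, hkS, hkv⟩ := (hcov v).mp hv
      obtain ⟨p, hp, hpA⟩ := exists_path_in_set G {i | u ∈ lab i} (hrip u) hju hui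
      obtain ⟨q, hq, hqB⟩ := exists_path_in_set G {i | v ∈ lab i} (hrip v) hkv hvi
      obtain ⟨m, r, hr, hmr, hmp, hmq, _⟩ := exists_meeting_vertex p q hp hq
      obtain ⟨r', hr', hr'S⟩ := exists_path_in_set G S hconn hjS hkS
      have heq : (⟨r, hr⟩ : G.Path jj kk) = ⟨r', hr'⟩ :=
        hG.IsAcyclic.path_unique _ _
      have hrr' : r = r' := congrArg Subtype.val heq
      exact ⟨m, hr'S m (hrr' ▸ hmr), hpA m hmp, hqB m hmq⟩
    · rintro ⟨i, _, hui, hvi⟩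
      exact ⟨i, hui, hvi⟩
  refine ⟨main, fun L hL => ?_⟩
  constructor
  · rintro ⟨a, b, c, ha, hb, hc, hab, hnab, hac, hbc, h1, h2⟩
    exact ⟨a, b, c, ha, hb, hc, hab,
      fun h => hnab ((main a (hL a ha) b (hL b hb)).mpr h),
      (main a (hL a ha) c (hL c hc)).mp hac,
      (main b (hL b hb) c (hL c hc)).mp hbc, h1, h2⟩
  · rintro ⟨a, b, c, ha, hb, hc, hab, hnab, hac, hbc, h1, h2⟩
    exact ⟨a, b, c, ha, hb, hc, hab,
      fun h => hnab ((main a (hL a ha) b (hL b hb)).mp h),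
      (main a (hL a ha) c (hL c hc)).mpr hac,
      (main b (hL b hb) c (hL c hc)).mpr hbc, h1, h2⟩
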